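/- Let κ be an infinite cardinal and X a graph on a linearly ordered vertex set V that is the union of sets A(t) indexed by nodes t of a tree T of height cf(λ), where edges only go between A(t), A(t') for comparable t, t'. Suppose cf(κ) > cf(λ) ≥ the length of every branch of T, and for each t the graph restricted to ∪{A(s) : s ≤ t} has no clique of cardinality κ. Then X has no clique of cardinality κ. -/

import Mathlib

open Cardinal

/-- Let `κ` be infinite, `X` a graph on a linearly ordered vertex set `V`
covered by sets `A t` indexed by a tree `T` whose chains (branches) have
cardinality at most `cf(λ) < cf(κ)`, with edges only between comparably indexed
sets, and such that for each `t` the restriction of `X` to the initial union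
`⋃_{t' ≤ t} A t'` has no clique of cardinality `κ`. Then `X` has no clique of
cardinality `κ`. -/
theorem stmt18 (kappa lam : Cardinal) (hkappa : ℵ₀ ≤ kappa)
    (hcf : lam.ord.cof < kappa.ord.cof)
    (T : Type) [PartialOrder T] (V : Type) [LinearOrder V]
    (X : SimpleGraph V) (A : T → Set V)
    (hcov : (⋃ t, A t) = Set.univ)
    (hedge : ∀ v w, X.Adj v w → ∀ t t', v ∈ A t → w ∈ A t' → t ≤ t' ∨ t' ≤ t)
    (hchain : ∀ c : Set T, IsChain (· ≤ ·) c → #c ≤ lam.ord.cof)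
    (hfree : ∀ t, ¬ ∃ s : Set V,
      s ⊆ (⋃ t' ≤ t, A t') ∧ X.IsClique s ∧ #s = kappa) :
    ¬ ∃ s : Set V, X.IsClique s ∧ #s = kappa := by
  rintro ⟨s, hclique, hcard⟩
  -- choose an index for each vertex of the clique
  have hmem : ∀ v : s, ∃ t : T, (v : V) ∈ A t := by
    intro v
    have : (v : V) ∈ ⋃ t, A t := by rw [hcov]; trivial
    simpa using this
  choose f hf using hmem
  -- the chosen indices form a chain
  have hchain' : IsChain (· ≤ ·) (Set.range f) := by
    rintro _ ⟨v, rfl⟩ _ ⟨w, rfl⟩ hne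
    have hvw : (v : V) ≠ (w : V) := by
      rintro h
      exact hne (congrArg f (Subtype.ext h))
    exact hedge _ _ (hclique v.2 w.2 hvw) _ _ (hf v) (hf w)
  have hC : #(Set.range f) < kappa.ord.cof :=
    lt_of_le_of_lt (hchain _ hchain') hcf
  -- the clique is partitioned into fibers over the range of `f`
  set C : Set T := Set.range f
  let g : s → C := fun v => ⟨f v, Set.mem_range_self v⟩
  have hsum : #s = Cardinal.sum fun c : C => #(g ⁻¹' {c}) := by
    rw [← Cardinal.mk_sigma fun c : C => (g ⁻¹' {c} : Set s)]
    exact Cardinal.mk_congr (Equiv.sigmaFiberEquiv g).symm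
  -- some fiber has cardinality `kappa`
  have hfib : ∃ c : C, #(g ⁻¹' {c}) = kappa := by
    by_contra hcon
    push_neg at hcon
    have hlt : ∀ c : C, #(g ⁻¹' {c}) < kappa := fun c =>
      lt_of_le_of_ne (le_trans (Cardinal.mk_le_mk_of_subset (Set.subset_univ _))
        (by rw [Cardinal.mk_univ, hcard])) (hcon c)
    have hsup : (⨆ c : C, #(g ⁻¹' {c})) < kappa :=
      Ordinal.iSup_lt hC hlt
    have : #s < kappa := by
      rw [hsum]
      refine lt_of_le_of_lt (Cardinal.sum_le_mk_mul_iSup _) ?_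
      exact Cardinal.mul_lt_of_lt hkappa
        (hC.trans_le (Ordinal.cof_ord_le kappa)) hsup
    rw [hcard] at this
    exact lt_irrefl _ this
  obtain ⟨c, hc⟩ := hfib
  -- the image of that fiber in `V` contradicts `hfree`
  refine hfree c.1 ⟨Subtype.val '' (g ⁻¹' {c}), ?_, ?_, ?_⟩
  · rintro _ ⟨v, hv, rfl⟩
    have hfv : f v = c.1 := congrArg Subtype.val hv
    exact Set.mem_biUnion le_rfl (hfv ▸ hf v)
  · exact hclique.subset (by rintro _ ⟨v, _, rfl⟩; exact v.2)
  · rw [Cardinal.mk_image_eq Subtype.val_injective]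
    exact hc
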